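/- Fix β > 0 and an integer N_s ≥ 1, and define the SUMF mutual information of TH-CDMA with Gaussian inputs as I(γ) = β · Σ_{k ≥ 0} ((N_s²β)^k e^{−N_s²β}/k!) · log₂( 1 + γ/(1 + (k/N_s²)γ) ) for γ > 0. Then I(γ) is unbounded as γ → ∞, and its high-SNR slope is lim_{γ→∞} I(γ)/log₂ γ = β e^{−N_s²β}. In particular, for fixed N_s the slope is maximized over β at β = 1/N_s², where it equals 1/(e N_s²). -/

import Mathlib

open Real Filter


/-- The large-system SUMF mutual information of TH-CDMA with load `β`, `N_s` pulses per
symbol and Gaussian inputs: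
`I(γ) = β·Σ_{k≥0} ((N_s²β)^k e^{−N_s²β}/k!)·log₂(1 + γ/(1 + (k/N_s²)γ))`. -/
noncomputable def sumfMutualInfo (β : ℝ) (Ns : ℕ) (γ : ℝ) : ℝ :=
  β * ∑' k : ℕ, ((Ns : ℝ) ^ 2 * β) ^ k * Real.exp (-(Ns : ℝ) ^ 2 * β) /
      (Nat.factorial k : ℝ) *
    Real.logb 2 (1 + γ / (1 + ((k : ℝ) / (Ns : ℝ) ^ 2) * γ))

/-- Fix `β > 0` and `N_s ≥ 1`.  Then: (i) `I(γ) → ∞` as `γ → ∞`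
(the SUMF mutual information of TH is unbounded); (ii) its high-SNR slope is
`lim_{γ→∞} I(γ)/log₂ γ = β·e^{−N_s²β}`; (iii) the slope `β ↦ β e^{−N_s²β}` is maximized
at `β = 1/N_s²`, where it equals `1/(e·N_s²)`. -/
theorem sumf_mutual_info_high_snr (β : ℝ) (hβ : 0 < β) (Ns : ℕ) (hNs : 1 ≤ Ns) :
    Filter.Tendsto (fun γ : ℝ => sumfMutualInfo β Ns γ) Filter.atTop Filter.atTop ∧
    Filter.Tendsto (fun γ : ℝ => sumfMutualInfo β Ns γ / Real.logb 2 γ)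
      Filter.atTop (nhds (β * Real.exp (-(Ns : ℝ) ^ 2 * β))) ∧
    (∀ β' : ℝ, 0 < β' →
      β' * Real.exp (-(Ns : ℝ) ^ 2 * β') ≤ 1 / (Real.exp 1 * (Ns : ℝ) ^ 2)) ∧
    (1 / (Ns : ℝ) ^ 2) * Real.exp (-(Ns : ℝ) ^ 2 * (1 / (Ns : ℝ) ^ 2)) =
      1 / (Real.exp 1 * (Ns : ℝ) ^ 2) := by
  have hNs1 : (1:ℝ) ≤ (Ns:ℝ) := by exact_mod_cast hNs
  set c : ℝ := (Ns:ℝ)^2 with hc_def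
  have hc : 0 < c := by positivity
  have hx : 0 < c * β := mul_pos hc hβ
  -- the Poisson weights
  set p : ℕ → ℝ := fun k => (c * β)^k * Real.exp (-(c) * β) / (Nat.factorial k : ℝ) with hp_def
  have hp_nonneg : ∀ k, 0 ≤ p k := by
    intro k
    have := (Real.exp_pos (-(c)*β)).le
    positivity
  have hp_sum : Summable p := by
    have h := (Real.summable_pow_div_factorial (c*β)).mul_right (Real.exp (-(c)*β))
    refine h.congr fun k => ?_
    simp [hp_def, div_mul_eq_mul_div]
  -- summability of the series for fixed γ ≥ 0
  have hfs : ∀ γ : ℝ, 0 ≤ γ →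
      Summable (fun k : ℕ => p k * Real.logb 2 (1 + γ / (1 + ((k:ℝ)/c) * γ))) := by
    intro γ hγ
    refine Summable.of_nonneg_of_le (fun k => ?_) (fun k => ?_)
      (hp_sum.mul_right (Real.logb 2 (1 + γ)))
    · have hd : (0:ℝ) < 1 + ((k:ℝ)/c)*γ := by positivity
      have : (0:ℝ) ≤ γ / (1 + ((k:ℝ)/c)*γ) := by positivity
      exact mul_nonneg (hp_nonneg k) (Real.logb_nonneg one_lt_two (by linarith))
    · refine mul_le_mul_of_nonneg_left ?_ (hp_nonneg k)
      refine Real.logb_le_logb_of_le one_lt_two ?_ ?_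
      · have hd : (0:ℝ) < 1 + ((k:ℝ)/c)*γ := by positivity
        have : (0:ℝ) ≤ γ / (1 + ((k:ℝ)/c)*γ) := by positivity
        linarith
      · have h0 : (0:ℝ) ≤ ((k:ℝ)/c)*γ := by positivity
        have := div_le_self hγ (by linarith : (1:ℝ) ≤ 1 + ((k:ℝ)/c)*γ)
        linarith
  -- tail sum
  set T : ℝ → ℝ := fun γ => ∑' k : ℕ, p (k+1) * Real.logb 2 (1 + γ / (1 + (((k:ℝ)+1)/c) * γ))
    with hT_def
  have hfs_tail : ∀ γ : ℝ, 0 ≤ γ →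
      Summable (fun k : ℕ => p (k+1) * Real.logb 2 (1 + γ / (1 + (((k:ℝ)+1)/c) * γ))) := by
    intro γ hγ
    have := (summable_nat_add_iff 1).mpr (hfs γ hγ)
    refine this.congr fun k => ?_
    push_cast
    ring_nf
  -- decomposition
  have hdecomp : ∀ γ : ℝ, 0 ≤ γ →
      sumfMutualInfo β Ns γ = β * (Real.exp (-(c)*β) * Real.logb 2 (1+γ) + T γ) := by
    intro γ hγ
    have h0 := Summable.tsum_eq_zero_add (hfs γ hγ)
    unfold sumfMutualInfo
    rw [show (fun k : ℕ => ((Ns : ℝ) ^ 2 * β) ^ k * Real.exp (-(Ns : ℝ) ^ 2 * β) /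
      (Nat.factorial k : ℝ) * Real.logb 2 (1 + γ / (1 + ((k : ℝ) / (Ns : ℝ) ^ 2) * γ)))
      = (fun k : ℕ => p k * Real.logb 2 (1 + γ / (1 + ((k:ℝ)/c) * γ))) from rfl]
    rw [h0]
    have hz : p 0 * Real.logb 2 (1 + γ / (1 + ((0:ℕ):ℝ)/c * γ))
        = Real.exp (-(c)*β) * Real.logb 2 (1+γ) := by
      simp [hp_def]
    rw [hz, hT_def]
    push_cast
    ring_nf
    refine congrArg (fun s => _ + β * s) (tsum_congr fun k => ?_)
    ring_nf
  -- bounds on the tail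
  have hT_nonneg : ∀ γ : ℝ, 0 ≤ γ → 0 ≤ T γ := by
    intro γ hγ
    refine tsum_nonneg fun k => ?_
    have hd : (0:ℝ) < 1 + (((k:ℝ)+1)/c)*γ := by positivity
    have : (0:ℝ) ≤ γ / (1 + (((k:ℝ)+1)/c)*γ) := by positivity
    exact mul_nonneg (hp_nonneg _) (Real.logb_nonneg one_lt_two (by linarith))
  set M : ℝ := (∑' k : ℕ, p (k+1)) * Real.logb 2 (1 + c) with hM_def
  have hM_nonneg : 0 ≤ M := by
    refine mul_nonneg (tsum_nonneg fun k => hp_nonneg _)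
      (Real.logb_nonneg one_lt_two (by linarith))
  have hT_le : ∀ γ : ℝ, 0 < γ → T γ ≤ M := by
    intro γ hγ
    rw [hM_def, ← tsum_mul_right]
    refine Summable.tsum_le_tsum (fun k => ?_) (hfs_tail γ hγ.le)
      (((summable_nat_add_iff 1).mpr hp_sum).mul_right _)
    refine mul_le_mul_of_nonneg_left ?_ (hp_nonneg _)
    refine Real.logb_le_logb_of_le one_lt_two ?_ ?_
    · have hd : (0:ℝ) < 1 + (((k:ℝ)+1)/c)*γ := by positivity
      have : (0:ℝ) ≤ γ / (1 + (((k:ℝ)+1)/c)*γ) := by positivity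
      linarith
    · have h1 : γ / c ≤ 1 + (((k:ℝ)+1)/c)*γ := by
        have hk0 : (0:ℝ) ≤ (k:ℝ) := Nat.cast_nonneg k
        have h2' : γ/c ≤ ((k:ℝ)+1)*γ/c := by
          gcongr
          nlinarith
        have h3' : ((k:ℝ)+1)*γ/c = (((k:ℝ)+1)/c)*γ := by ring
        linarith
      have h2 : γ / (1 + (((k:ℝ)+1)/c)*γ) ≤ γ / (γ/c) :=
        div_le_div_of_nonneg_left hγ.le (by positivity) h1
      have h3 : γ / (γ/c) = c := by field_simp
      linarith [h2.trans_eq h3]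
  -- part (i)
  have hE : 0 < Real.exp (-(c)*β) := Real.exp_pos _
  have hlog1 : Tendsto (fun γ : ℝ => β * Real.exp (-(c)*β) * Real.logb 2 (1+γ))
      atTop atTop := by
    refine Tendsto.const_mul_atTop (by positivity) ?_
    exact (Real.tendsto_logb_atTop one_lt_two).comp (tendsto_atTop_add_const_left _ _ tendsto_id)
  have part1 : Tendsto (fun γ : ℝ => sumfMutualInfo β Ns γ) atTop atTop := by
    refine tendsto_atTop_mono' _ ?_ hlog1
    filter_upwards [eventually_gt_atTop (0:ℝ)] with γ hγ
    rw [hdecomp γ hγ.le]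
    have := hT_nonneg γ hγ.le
    nlinarith
  -- part (ii)
  have hlogbTop : Tendsto (fun γ : ℝ => Real.logb 2 γ) atTop atTop :=
    Real.tendsto_logb_atTop one_lt_two
  have hratio : Tendsto (fun γ : ℝ => Real.logb 2 (1+γ) / Real.logb 2 γ) atTop (nhds 1) := by
    have hsmall : Tendsto (fun γ : ℝ => Real.logb 2 (1+γ⁻¹) / Real.logb 2 γ) atTop (nhds 0) := by
      refine Tendsto.div_atTop (a := (0:ℝ)) ?_ hlogbTop
      have h1 : Tendsto (fun γ : ℝ => 1+γ⁻¹) atTop (nhds 1) := by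
        simpa using (tendsto_inv_atTop_zero).const_add (1:ℝ)
      have h2 : ContinuousAt (Real.logb 2) 1 :=
        (Real.continuousAt_logb (by norm_num)).comp (continuousAt_id)
      have h3 := (Real.continuousAt_logb (x := (1:ℝ)) (b := 2) (by norm_num)).tendsto.comp h1
      simpa [Real.logb, Function.comp_def] using h3
    have heq : ∀ᶠ γ : ℝ in atTop, 1 + Real.logb 2 (1+γ⁻¹) / Real.logb 2 γ
        = Real.logb 2 (1+γ) / Real.logb 2 γ := by
      filter_upwards [eventually_gt_atTop (1:ℝ)] with γ hγ
      have hγ0 : (0:ℝ) < γ := by linarith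
      have hlγ : 0 < Real.logb 2 γ := Real.logb_pos one_lt_two hγ
      have hmul : (1:ℝ)+γ = γ * (1+γ⁻¹) := by field_simp; ring
      rw [hmul, Real.logb_mul (by positivity) (by positivity)]
      field_simp
    have := hsmall.const_add (1:ℝ)
    simp only [add_zero] at this
    exact this.congr' heq
  have hzero : Tendsto (fun γ : ℝ => β * M / Real.logb 2 γ) atTop (nhds 0) :=
    Tendsto.div_atTop tendsto_const_nhds hlogbTop
  have part2 : Tendsto (fun γ : ℝ => sumfMutualInfo β Ns γ / Real.logb 2 γ)
      atTop (nhds (β * Real.exp (-(c)*β))) := by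
    have hlow : Tendsto (fun γ : ℝ => β * Real.exp (-(c)*β) *
        (Real.logb 2 (1+γ) / Real.logb 2 γ)) atTop (nhds (β * Real.exp (-(c)*β))) := by
      simpa using hratio.const_mul (β * Real.exp (-(c)*β))
    have hup : Tendsto (fun γ : ℝ => β * Real.exp (-(c)*β) *
        (Real.logb 2 (1+γ) / Real.logb 2 γ) + β * M / Real.logb 2 γ)
        atTop (nhds (β * Real.exp (-(c)*β))) := by
      simpa using hlow.add hzero
    refine tendsto_of_tendsto_of_tendsto_of_le_of_le' hlow hup ?_ ?_
    · filter_upwards [eventually_gt_atTop (1:ℝ)] with γ hγ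
      have hγ0 : (0:ℝ) < γ := by linarith
      have hlγ : 0 < Real.logb 2 γ := Real.logb_pos one_lt_two hγ
      rw [hdecomp γ hγ0.le,
        show β * Real.exp (-(c)*β) * (Real.logb 2 (1+γ) / Real.logb 2 γ)
          = β * (Real.exp (-(c)*β) * Real.logb 2 (1+γ)) / Real.logb 2 γ from by ring]
      have hT0 := hT_nonneg γ hγ0.le
      gcongr
      nlinarith
    · filter_upwards [eventually_gt_atTop (1:ℝ)] with γ hγ
      have hγ0 : (0:ℝ) < γ := by linarith
      have hlγ : 0 < Real.logb 2 γ := Real.logb_pos one_lt_two hγ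
      rw [hdecomp γ hγ0.le,
        show β * Real.exp (-(c)*β) * (Real.logb 2 (1+γ) / Real.logb 2 γ)
            + β * M / Real.logb 2 γ
          = β * (Real.exp (-(c)*β) * Real.logb 2 (1+γ) + M) / Real.logb 2 γ from by ring]
      have hTle := hT_le γ hγ0
      gcongr
  refine ⟨part1, part2, ?_, ?_⟩
  · intro β' hβ'
    have h1 : c * β' ≤ Real.exp (c*β' - 1) := by
      have := Real.add_one_le_exp (c*β' - 1)
      linarith
    have h2 : c * β' * Real.exp (-(c*β')) ≤ Real.exp (-1) := by
      calc c * β' * Real.exp (-(c*β'))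
          ≤ Real.exp (c*β'-1) * Real.exp (-(c*β')) :=
            mul_le_mul_of_nonneg_right h1 (Real.exp_pos _).le
        _ = Real.exp (-1) := by rw [← Real.exp_add]; ring_nf
    have h3 : Real.exp (-1) * Real.exp 1 = 1 := by
      rw [← Real.exp_add]; norm_num
    rw [le_div_iff₀ (by positivity)] at *
    have h4 := mul_le_mul_of_nonneg_left h2 (Real.exp_pos 1).le
    have : Real.exp (-(Ns:ℝ)^2 * β') = Real.exp (-(c*β')) := by rw [hc_def]; ring_nf
    rw [this]
    nlinarith [Real.exp_pos (-(c*β'))]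
  · have hne : c ≠ 0 := ne_of_gt hc
    have h1 : -(Ns:ℝ)^2 * (1/(Ns:ℝ)^2) = -1 := by
      rw [← hc_def]; field_simp
    rw [h1, Real.exp_neg]
    have hN0 : (Ns:ℝ) ≠ 0 := by positivity
    field_simp
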